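/- For 0 < r < 1, the Cayley transform Φ(z) = ( √2·'z/(zₙ−1), (zₙ+1)/(zₙ−1) ) maps the domain Ω = { z ∈ ℂⁿ : 2 Re zₙ + r|'z|² < 0 } bijectively onto the bounded domain { z ∈ ℂⁿ : r|'z|² + |zₙ|² < 1 }. -/

import Mathlib

open Real

lemma sum_aux (m : ℕ) (u : Fin m → ℂ) (d : ℂ) :
    ∑ i, ‖(Real.sqrt 2 : ℂ) * u i / d‖ ^ 2 = (2 / ‖d‖ ^ 2) * ∑ i, ‖u i‖ ^ 2 := by
  rw [Finset.mul_sum]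
  apply Finset.sum_congr rfl
  intro i _
  rw [norm_div, norm_mul, div_pow, mul_pow, Complex.norm_real, Real.norm_eq_abs,
    abs_of_nonneg (Real.sqrt_nonneg 2), Real.sq_sqrt (by norm_num : (2:ℝ) ≥ 0)]
  ring

lemma normsq_diff (w : ℂ) : ‖w + 1‖ ^ 2 - ‖w - 1‖ ^ 2 = 4 * w.re := by
  simp only [Complex.sq_norm, Complex.normSq_apply, Complex.add_re,
    Complex.sub_re, Complex.add_im, Complex.sub_im, Complex.one_re, Complex.one_im]
  ring

lemma re_div (w : ℂ) (hw : w ≠ 1) :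
    ((w + 1) / (w - 1)).re = (‖w‖ ^ 2 - 1) / ‖w - 1‖ ^ 2 := by
  have hd : w - 1 ≠ 0 := sub_ne_zero.mpr hw
  have hD : Complex.normSq (w - 1) ≠ 0 := (Complex.normSq_pos.mpr hd).ne'
  rw [Complex.div_re]
  simp only [Complex.sq_norm, Complex.normSq_apply, Complex.add_re,
    Complex.sub_re, Complex.add_im, Complex.sub_im, Complex.one_re, Complex.one_im] at *
  field_simp
  ring

theorem cayley_maps_Omega (m : ℕ) (r : ℝ) (hr0 : 0 < r) (hr1 : r < 1)
    (Φ : (Fin m → ℂ) × ℂ → (Fin m → ℂ) × ℂ)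
    (hΦ : ∀ z : (Fin m → ℂ) × ℂ,
      Φ z = (fun i => (Real.sqrt 2 : ℂ) * z.1 i / (z.2 - 1), (z.2 + 1) / (z.2 - 1))) :
    Set.BijOn Φ
      {z : (Fin m → ℂ) × ℂ | 2 * z.2.re + r * ∑ i, ‖z.1 i‖ ^ 2 < 0}
      {z : (Fin m → ℂ) × ℂ | r * ∑ i, ‖z.1 i‖ ^ 2 + ‖z.2‖ ^ 2 < 1} := by
  have hne1 : ∀ z : (Fin m → ℂ) × ℂ, 2 * z.2.re + r * ∑ i, ‖z.1 i‖ ^ 2 < 0 → z.2 ≠ 1 := by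
    intro z hz h1
    have hs : 0 ≤ ∑ i, ‖z.1 i‖ ^ 2 := Finset.sum_nonneg fun i _ => sq_nonneg _
    rw [h1] at hz
    simp only [Complex.one_re] at hz
    nlinarith
  have hne2 : ∀ z : (Fin m → ℂ) × ℂ, r * ∑ i, ‖z.1 i‖ ^ 2 + ‖z.2‖ ^ 2 < 1 → z.2 ≠ 1 := by
    intro z hz h1
    have hs : 0 ≤ ∑ i, ‖z.1 i‖ ^ 2 := Finset.sum_nonneg fun i _ => sq_nonneg _
    rw [h1] at hz
    simp only [norm_one] at hz
    nlinarith
  have hmap : ∀ z : (Fin m → ℂ) × ℂ, z.2 ≠ 1 →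
      (r * ∑ i, ‖(Φ z).1 i‖ ^ 2 + ‖(Φ z).2‖ ^ 2 < 1 ↔
        2 * z.2.re + r * ∑ i, ‖z.1 i‖ ^ 2 < 0) := by
    intro z hz
    have hd : z.2 - 1 ≠ 0 := sub_ne_zero.mpr hz
    have hD : (0:ℝ) < ‖z.2 - 1‖ ^ 2 := pow_pos (norm_pos_iff.mpr hd) 2
    rw [hΦ]
    simp only
    rw [sum_aux m z.1 _, norm_div, div_pow]
    have h2 : ‖z.2 + 1‖ ^ 2 = ‖z.2 - 1‖ ^ 2 + 4 * z.2.re := by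
      linarith [normsq_diff z.2]
    have e : r * (2 / ‖z.2 - 1‖ ^ 2 * ∑ i, ‖z.1 i‖ ^ 2) + ‖z.2 + 1‖ ^ 2 / ‖z.2 - 1‖ ^ 2
        = (2 * (2 * z.2.re + r * ∑ i, ‖z.1 i‖ ^ 2) + ‖z.2 - 1‖ ^ 2) / ‖z.2 - 1‖ ^ 2 := by
      rw [h2]; field_simp; ring
    rw [e, div_lt_one hD]
    constructor <;> intro h <;> linarith
  have hmap2 : ∀ w : (Fin m → ℂ) × ℂ, w.2 ≠ 1 →
      (2 * (Φ w).2.re + r * ∑ i, ‖(Φ w).1 i‖ ^ 2 < 0 ↔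
        r * ∑ i, ‖w.1 i‖ ^ 2 + ‖w.2‖ ^ 2 < 1) := by
    intro w hw
    have hd : w.2 - 1 ≠ 0 := sub_ne_zero.mpr hw
    have hD : (0:ℝ) < ‖w.2 - 1‖ ^ 2 := pow_pos (norm_pos_iff.mpr hd) 2
    rw [hΦ]
    simp only
    rw [sum_aux m w.1 _, re_div w.2 hw]
    have e : 2 * ((‖w.2‖ ^ 2 - 1) / ‖w.2 - 1‖ ^ 2) + r * (2 / ‖w.2 - 1‖ ^ 2 * ∑ i, ‖w.1 i‖ ^ 2)
        = (2 * (r * ∑ i, ‖w.1 i‖ ^ 2 + ‖w.2‖ ^ 2 - 1)) / ‖w.2 - 1‖ ^ 2 := by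
      field_simp; ring
    rw [e, div_neg_iff]
    constructor
    · rintro (⟨h1, h2⟩ | ⟨h1, h2⟩) <;> linarith
    · intro h; right; exact ⟨by linarith, hD⟩
  have hinv : ∀ z : (Fin m → ℂ) × ℂ, z.2 ≠ 1 → Φ (Φ z) = z := by
    intro z hz
    have hd : z.2 - 1 ≠ 0 := sub_ne_zero.mpr hz
    have h22 : (Real.sqrt 2 : ℂ) * (Real.sqrt 2 : ℂ) = 2 := by
      rw [← Complex.ofReal_mul, Real.mul_self_sqrt (by norm_num : (0:ℝ) ≤ 2)]
      norm_num
    rw [hΦ, hΦ]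
    simp only
    have hw : (z.2 + 1) / (z.2 - 1) - 1 = 2 / (z.2 - 1) := by field_simp; ring
    rw [Prod.ext_iff]
    constructor
    · funext i
      simp only [hw]
      field_simp
      rw [sq, h22]; ring
    · simp only [hw]
      field_simp
      ring
  refine ⟨fun z hz => (hmap z (hne1 z hz)).mpr hz, ?_, ?_⟩
  · intro a ha b hb hab
    calc a = Φ (Φ a) := (hinv a (hne1 a ha)).symm
    _ = Φ (Φ b) := by rw [hab]
    _ = b := hinv b (hne1 b hb)
  · intro w hw
    exact ⟨Φ w, (hmap2 w (hne2 w hw)).mpr hw, hinv w (hne2 w hw)⟩
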